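/- Let Ω ⊆ ℝⁿ be open, let u : ℝⁿ → ℝ be a C¹ function whose (compact) support is contained in Ω, and let w be a C² real-valued function on Ω. Then ∫_Ω |∇u|² dx ≥ ∫_Ω (Δw − |∇w|²) u² dx. -/

import Mathlib

open MeasureTheory Real

open Manifold

/-- The `i`-th partial derivative of a function on `ℝⁿ`. -/
noncomputable def pd (n : ℕ) (f : EuclideanSpace ℝ (Fin n) → ℝ)
    (i : Fin n) (x : EuclideanSpace ℝ (Fin n)) : ℝ :=
  fderiv ℝ f x (EuclideanSpace.single i 1)

/-- The squared Euclidean norm of the gradient, `|∇f|² = Σᵢ (∂ᵢf)²`. -/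
noncomputable def gradSq (n : ℕ) (f : EuclideanSpace ℝ (Fin n) → ℝ)
    (x : EuclideanSpace ℝ (Fin n)) : ℝ :=
  ∑ i, (pd n f i x) ^ 2

/-- The Euclidean Laplacian, `Δf = Σᵢ ∂ᵢ²f`. -/
noncomputable def lap (n : ℕ) (f : EuclideanSpace ℝ (Fin n) → ℝ)
    (x : EuclideanSpace ℝ (Fin n)) : ℝ :=
  ∑ i, pd n (pd n f i) i x

section aux

variable {n : ℕ}

lemma continuous_fderiv_apply {f : EuclideanSpace ℝ (Fin n) → ℝ}
    (hf : ContDiff ℝ 1 f) (v : EuclideanSpace ℝ (Fin n)) :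
    Continuous fun x => fderiv ℝ f x v :=
  (ContinuousLinearMap.apply ℝ ℝ v).continuous.comp (hf.continuous_fderiv one_ne_zero)

lemma hcs_fderiv_apply {f : EuclideanSpace ℝ (Fin n) → ℝ}
    (hc : HasCompactSupport f) (v : EuclideanSpace ℝ (Fin n)) :
    HasCompactSupport fun x => fderiv ℝ f x v :=
  (HasCompactSupport.fderiv ℝ hc).comp_left (g := fun L : _ →L[ℝ] ℝ => L v) rfl

/-- For a compactly supported `C¹` function, the integral of any directional
derivative vanishes. -/
lemma integral_fderiv_apply_eq_zero {f : EuclideanSpace ℝ (Fin n) → ℝ}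
    (hf : ContDiff ℝ 1 f) (hc : HasCompactSupport f) (v : EuclideanSpace ℝ (Fin n)) :
    ∫ x, fderiv ℝ f x v = 0 := by
  have h1 : Integrable (fun x => fderiv ℝ f x v * (fun _ => (1 : ℝ)) x) volume := by
    simp only [mul_one]
    exact (continuous_fderiv_apply hf v).integrable_of_hasCompactSupport
      (hcs_fderiv_apply hc v)
  have h2 : Integrable (fun x => f x * fderiv ℝ (fun _ => (1 : ℝ)) x v) volume := by
    simp only [fderiv_fun_const, Pi.zero_apply, ContinuousLinearMap.zero_apply, mul_zero]
    exact integrable_zero _ _ _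
  have h3 : Integrable (fun x => f x * (fun _ => (1 : ℝ)) x) volume := by
    simp only [mul_one]
    exact hf.continuous.integrable_of_hasCompactSupport hc
  have := integral_mul_fderiv_eq_neg_fderiv_mul_of_integrable h1 h2 h3
    (fun x _ => hf.differentiable one_ne_zero x) (fun x _ => differentiableAt_const (1 : ℝ))
  simp only [fderiv_fun_const, Pi.zero_apply, ContinuousLinearMap.zero_apply, mul_zero,
    mul_one, integral_zero] at this
  linarith

end aux

/-- Flat-case weighted Poincaré lemma: for `u` of class `C¹` with compact support
in the open set `Ω` and `w` of class `C²` on `Ω`,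
`∫_Ω |∇u|² ≥ ∫_Ω (Δw − |∇w|²) u²`. -/
theorem weighted_poincare_basic (n : ℕ) (Ω : Set (EuclideanSpace ℝ (Fin n)))
    (hΩ : IsOpen Ω) (u w : EuclideanSpace ℝ (Fin n) → ℝ)
    (hu : ContDiff ℝ 1 u) (husupp : HasCompactSupport u) (huΩ : tsupport u ⊆ Ω)
    (hw : ContDiffOn ℝ 2 w Ω) :
    ∫ x in Ω, gradSq n u x ≥ ∫ x in Ω, (lap n w x - gradSq n w x) * (u x) ^ 2 := by
  classical
  -- a compact set K between tsupport u and Ω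
  obtain ⟨K, hK, hsubK, hKΩ⟩ := exists_compact_between husupp hΩ huΩ
  -- smooth cutoff χ, equal to 1 near tsupport u, vanishing outside K
  obtain ⟨χ, hχ1, hχ0, hχ01⟩ :=
    exists_contMDiffMap_one_nhds_of_subset_interior 𝓘(ℝ, EuclideanSpace ℝ (Fin n)) (n := (⊤ : ℕ∞)) (isClosed_tsupport u) hsubK
  obtain ⟨U, hUopen, hUsub, hU1⟩ := eventually_nhdsSet_iff_exists.1 hχ1
  have hχtop : ContDiff ℝ (((⊤ : ℕ∞)) : WithTop ℕ∞) (χ : EuclideanSpace ℝ (Fin n) → ℝ) :=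
    χ.contMDiff.contDiff
  have hχsm : ContDiff ℝ 2 (χ : EuclideanSpace ℝ (Fin n) → ℝ) :=
    hχtop.of_le (WithTop.coe_le_coe.2 le_top)
  have hχsupp : tsupport (χ : EuclideanSpace ℝ (Fin n) → ℝ) ⊆ K :=
    closure_minimal (fun x hx => by
      by_contra hxK
      exact hx (hχ0 x hxK)) hK.isClosed
  set W : EuclideanSpace ℝ (Fin n) → ℝ := fun x => χ x * w x with hW
  have hWc : HasCompactSupport W := by
    apply HasCompactSupport.intro hK
    intro x hx
    simp [hW, hχ0 x hx]
  have hW2 : ContDiff ℝ 2 W := by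
    rw [contDiff_iff_contDiffAt]
    intro x
    by_cases hx : x ∈ Ω
    · exact hχsm.contDiffAt.mul (hw.contDiffAt (hΩ.mem_nhds hx))
    · have hx' : x ∉ tsupport (χ : EuclideanSpace ℝ (Fin n) → ℝ) := fun h => hx (hKΩ (hχsupp h))
      apply ContDiffAt.congr_of_eventuallyEq (contDiffAt_const (c := (0 : ℝ)))
      filter_upwards [(isClosed_tsupport (χ : EuclideanSpace ℝ (Fin n) → ℝ)).isOpen_compl.mem_nhds hx'] with y hy
      simp [hW, image_eq_zero_of_notMem_tsupport hy]
  -- on U, W agrees with w, together with first and second derivatives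
  have hWw : ∀ x ∈ U, W x = w x := fun x hx => by simp [hW, hU1 x hx]
  have hpdWw : ∀ i, ∀ x ∈ U, pd n W i x = pd n w i x := by
    intro i x hx
    have hev : W =ᶠ[nhds x] w := by
      filter_upwards [hUopen.mem_nhds hx] with y hy using hWw y hy
    simp only [pd, hev.fderiv_eq]
  have hpd2Ww : ∀ i, ∀ x ∈ U, pd n (pd n W i) i x = pd n (pd n w i) i x := by
    intro i x hx
    have hev : pd n W i =ᶠ[nhds x] pd n w i := by
      filter_upwards [hUopen.mem_nhds hx] with y hy using hpdWw i y hy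
    simp only [pd, hev.fderiv_eq]
  -- the two integrands with w and with W agree
  have hinteq : ∀ x, (lap n w x - gradSq n w x) * u x ^ 2
      = (lap n W x - gradSq n W x) * u x ^ 2 := by
    intro x
    by_cases hx : u x = 0
    · simp [hx]
    · have hxU : x ∈ U := hUsub (subset_closure (by simpa using hx))
      have h1 : lap n w x = lap n W x :=
        Finset.sum_congr rfl fun i _ => (hpd2Ww i x hxU).symm
      have h2 : gradSq n w x = gradSq n W x :=
        Finset.sum_congr rfl fun i _ => by rw [hpdWw i x hxU]
      rw [h1, h2]
  -- differentiability / continuity facts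
  have hud : Differentiable ℝ u := hu.differentiable one_ne_zero
  have hQcd : ∀ i, ContDiff ℝ 1 (pd n W i) := fun i =>
    (hW2.fderiv_right (le_refl _)).clm_apply contDiff_const
  have hQd : ∀ i, Differentiable ℝ (pd n W i) := fun i => (hQcd i).differentiable one_ne_zero
  have hQcont : ∀ i, Continuous (pd n W i) := fun i => (hQcd i).continuous
  have hPcont : ∀ i, Continuous (pd n u i) := fun i => continuous_fderiv_apply hu _
  have hQ2cont : ∀ i, Continuous (pd n (pd n W i) i) := fun i =>
    continuous_fderiv_apply (hQcd i) _
  -- convenient abbreviations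
  set t : Fin n → EuclideanSpace ℝ (Fin n) → ℝ := fun i x =>
    2 * u x * pd n u i x * pd n W i x + u x * u x * pd n (pd n W i) i x with ht
  set h : Fin n → EuclideanSpace ℝ (Fin n) → ℝ := fun i x => u x * u x * pd n W i x with hh
  have hfd : ∀ i x, fderiv ℝ (h i) x (EuclideanSpace.single i 1) = t i x := by
    intro i x
    have d1 := (hud x).hasFDerivAt
    have d2 := (hQd i x).hasFDerivAt
    have H := (d1.mul d1).mul d2
    rw [hh]
    show fderiv ℝ (u * u * pd n W i) x (EuclideanSpace.single i 1) = t i x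
    rw [H.fderiv]
    simp only [ht, pd, ContinuousLinearMap.add_apply, ContinuousLinearMap.smul_apply,
      smul_eq_mul, Pi.mul_apply]
    ring
  have hhc : ∀ i, HasCompactSupport (h i) := by
    intro i
    apply HasCompactSupport.intro husupp
    intro x hx
    simp [hh, image_eq_zero_of_notMem_tsupport hx]
  have hh1 : ∀ i, ContDiff ℝ 1 (h i) := fun i => (hu.mul hu).mul (hQcd i)
  have htint : ∀ i, Integrable (t i) volume := by
    intro i
    have : Integrable (fun x => fderiv ℝ (h i) x (EuclideanSpace.single i 1)) volume :=
      (continuous_fderiv_apply (hh1 i) _).integrable_of_hasCompactSupport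
        (hcs_fderiv_apply (hhc i) _)
    rwa [show (fun x => fderiv ℝ (h i) x (EuclideanSpace.single i 1)) = t i from
      funext (hfd i)] at this
  have htzero : ∀ i, ∫ x, t i x = 0 := by
    intro i
    rw [show t i = fun x => fderiv ℝ (h i) x (EuclideanSpace.single i 1) from
      (funext (hfd i)).symm]
    exact integral_fderiv_apply_eq_zero (hh1 i) (hhc i) _
  -- the "cross term" function F
  set F : EuclideanSpace ℝ (Fin n) → ℝ := fun x => ∑ i, t i x with hF
  have hFint : Integrable F volume := integrable_finset_sum _ fun i _ => htint i
  have hFzero : ∫ x, F x = 0 := by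
    rw [hF]
    rw [integral_finset_sum _ fun i _ => htint i]
    simp [htzero]
  -- the sum of squares function
  set S : EuclideanSpace ℝ (Fin n) → ℝ := fun x => ∑ i, (pd n u i x + u x * pd n W i x) ^ 2 with hS
  have hScont : Continuous S :=
    continuous_finset_sum _ fun i _ => ((hPcont i).add (hu.continuous.mul (hQcont i))).pow 2
  have hScs : HasCompactSupport S := by
    apply HasCompactSupport.intro husupp
    intro x hx
    have h0 : u x = 0 := image_eq_zero_of_notMem_tsupport hx
    have h1 : fderiv ℝ u x = 0 := by
      by_contra hne
      exact hx (support_fderiv_subset ℝ (by simpa using hne))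
    simp [hS, pd, h0, h1]
  have hSint : Integrable S volume := hScont.integrable_of_hasCompactSupport hScs
  have hSnonneg : 0 ≤ ∫ x, S x :=
    integral_nonneg fun x => Finset.sum_nonneg fun i _ => sq_nonneg _
  -- gradSq u : continuous, compactly supported
  have hgucont : Continuous (gradSq n u) :=
    continuous_finset_sum _ fun i _ => (hPcont i).pow 2
  have hgucs : HasCompactSupport (gradSq n u) := by
    apply HasCompactSupport.intro husupp
    intro x hx
    have h1 : fderiv ℝ u x = 0 := by
      by_contra hne
      exact hx (support_fderiv_subset ℝ (by simpa using hne))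
    simp [gradSq, pd, h1]
  have hguint : Integrable (gradSq n u) volume :=
    hgucont.integrable_of_hasCompactSupport hgucs
  -- the W-integrand G
  set G : EuclideanSpace ℝ (Fin n) → ℝ := fun x => (lap n W x - gradSq n W x) * u x ^ 2 with hG
  have hGcont : Continuous G := by
    apply Continuous.mul
    · exact (continuous_finset_sum _ fun i _ => hQ2cont i).sub
        (continuous_finset_sum _ fun i _ => (hQcont i).pow 2)
    · exact hu.continuous.pow 2
  have hGcs : HasCompactSupport G := by
    apply HasCompactSupport.intro husupp
    intro x hx
    simp [hG, image_eq_zero_of_notMem_tsupport hx]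
  have hGint : Integrable G volume := hGcont.integrable_of_hasCompactSupport hGcs
  -- pass from set integrals to integrals over the whole space
  have e1 : ∫ x in Ω, gradSq n u x = ∫ x, gradSq n u x := by
    apply setIntegral_eq_integral_of_forall_compl_eq_zero
    intro x hx
    have hx' : x ∉ tsupport u := fun h => hx (huΩ h)
    have h1 : fderiv ℝ u x = 0 := by
      by_contra hne
      exact hx' (support_fderiv_subset ℝ (by simpa using hne))
    simp [gradSq, pd, h1]
  have e2 : ∫ x in Ω, (lap n w x - gradSq n w x) * u x ^ 2 = ∫ x, G x := by
    rw [show (fun x => (lap n w x - gradSq n w x) * u x ^ 2) = G from funext hinteq]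
    apply setIntegral_eq_integral_of_forall_compl_eq_zero
    intro x hx
    have hx' : x ∉ tsupport u := fun h => hx (huΩ h)
    simp [hG, image_eq_zero_of_notMem_tsupport hx']
  -- key pointwise identity
  have hpt : ∀ x, gradSq n u x - G x = S x - F x := by
    intro x
    show gradSq n u x - (lap n W x - gradSq n W x) * u x ^ 2
      = (∑ i, (pd n u i x + u x * pd n W i x) ^ 2)
        - ∑ i, (2 * u x * pd n u i x * pd n W i x + u x * u x * pd n (pd n W i) i x)
    rw [show (lap n W x - gradSq n W x) * u x ^ 2
        = ∑ i, (pd n (pd n W i) i x - (pd n W i x) ^ 2) * u x ^ 2 by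
          rw [lap, gradSq, ← Finset.sum_sub_distrib, Finset.sum_mul],
      gradSq, ← Finset.sum_sub_distrib, ← Finset.sum_sub_distrib]
    exact Finset.sum_congr rfl fun i _ => by ring
  -- conclude
  rw [ge_iff_le, e1, e2, ← sub_nonneg, ← integral_sub hguint hGint]
  rw [show (fun x => gradSq n u x - G x) = fun x => S x - F x from funext hpt]
  rw [integral_sub hSint hFint, hFzero, sub_zero]
  exact hSnonneg
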